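/- Let g₁, …, g_m : ℝ^d → ℝ each be Lipschitz continuous and SISTr, with pointwise scaling limits g_{1,∞}, …, g_{m,∞} that are each SISTr at the origin. Let ψ : ℝ^m → ℝ be Lipschitz continuous and strictly monotone (ψ(y) > ψ(y') whenever y_i > y'_i for all i), with ψ(y) → ∞ as min_i y_i → ∞ and ψ(y) → −∞ as max_i y_i → −∞; and suppose ψ(c·y)/c converges pointwise as c → ∞ to a function ψ∞ : ℝ^m → ℝ that is also Lipschitz, strictly monotone, and satisfies ψ∞(y) → ∞ as min_i y_i → ∞ and ψ∞(y) → −∞ as max_i y_i → −∞. Then f(x) := ψ(g₁(x), …, g_m(x)) is Lipschitz continuous and SISTr, f(c·x)/c converges pointwise as c → ∞ to f∞(x) := ψ∞(g_{1,∞}(x), …, g_{m,∞}(x)), and f∞ is SISTr at the origin. -/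
import Mathlib

open Filter

lemma lipAux {n : ℕ} {ψ : (Fin n → ℝ) → ℝ} {L : ℝ}
    (h : ∀ y y' : Fin n → ℝ, |ψ y - ψ y'| ≤ L * ‖y - y'‖) :
    LipschitzWith ⟨|L|, abs_nonneg L⟩ ψ := by
  apply LipschitzWith.of_dist_le_mul
  intro y y'
  rw [Real.dist_eq, dist_eq_norm]
  calc |ψ y - ψ y'| ≤ L * ‖y - y'‖ := h y y'
    _ ≤ |L| * ‖y - y'‖ :=
        mul_le_mul_of_nonneg_right (le_abs_self L) (norm_nonneg _)

lemma compSISTr {m : ℕ} (φ : Fin m → ℝ → ℝ)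
    (hmono : ∀ k, StrictMono (φ k)) (hsurj : ∀ k, Function.Surjective (φ k))
    (ψ : (Fin m → ℝ) → ℝ) (hψc : Continuous ψ)
    (hψmono : ∀ y y' : Fin m → ℝ, (∀ i, y' i < y i) → ψ y' < ψ y)
    (hψtop : ∀ M : ℝ, ∃ N : ℝ, ∀ y : Fin m → ℝ, (∀ i, N ≤ y i) → M ≤ ψ y)
    (hψbot : ∀ M : ℝ, ∃ N : ℝ, ∀ y : Fin m → ℝ, (∀ i, y i ≤ N) → ψ y ≤ M) :
    StrictMono (fun c : ℝ => ψ (fun k => φ k c)) ∧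
      Function.Surjective (fun c : ℝ => ψ (fun k => φ k c)) := by
  have hφc : ∀ k, Continuous (φ k) := fun k =>
    ((hmono k).orderIsoOfSurjective _ (hsurj k)).continuous
  have hφtop : ∀ k, Tendsto (φ k) atTop atTop := fun k =>
    tendsto_atTop_atTop_of_monotone (hmono k).monotone
      (fun b => (hsurj k b).imp fun a ha => ha.ge)
  have hφbot : ∀ k, Tendsto (φ k) atBot atBot := fun k =>
    tendsto_atBot_atBot_of_monotone (hmono k).monotone
      (fun b => (hsurj k b).imp fun a ha => ha.le)
  constructor
  · intro c c' hcc
    exact hψmono _ _ (fun k => hmono k hcc)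
  · apply Continuous.surjective
    · exact hψc.comp (continuous_pi fun k => hφc k)
    · rw [tendsto_atTop]
      intro M
      obtain ⟨N, hN⟩ := hψtop M
      have : ∀ᶠ c in atTop, ∀ k, N ≤ φ k c :=
        eventually_all.2 fun k => (hφtop k).eventually_ge_atTop N
      exact this.mono fun c hc => hN _ hc
    · rw [tendsto_atBot]
      intro M
      obtain ⟨N, hN⟩ := hψbot M
      have : ∀ᶠ c in atBot, ∀ k, φ k c ≤ N :=
        eventually_all.2 fun k => (hφbot k).eventually_le_atBot N
      exact this.mono fun c hc => hN _ hc



/-- `g : ℝ^d → ℝ` is strictly increasing under scalar translation (SISTr)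
at `x`. -/
def SISTrAt {d : ℕ} (g : (Fin d → ℝ) → ℝ) (x : Fin d → ℝ) : Prop :=
  StrictMono (fun c : ℝ => g (fun i => x i + c)) ∧
    Function.Surjective (fun c : ℝ => g (fun i => x i + c))

/-- `g` is SISTr if it is SISTr at every point. -/
def SISTr {d : ℕ} (g : (Fin d → ℝ) → ℝ) : Prop :=
  ∀ x : Fin d → ℝ, SISTrAt g x

/-- Composing SISTr functions `g₁, …, g_m` with a Lipschitz, strictly
monotone, coercive `ψ` yields a Lipschitz SISTr function
`f = ψ(g₁, …, g_m)` whose scaling limit is `f∞ = ψ∞(g_{1,∞}, …, g_{m,∞})`,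
which is SISTr at the origin. -/
theorem statement14 {d m : ℕ} (hd : 1 ≤ d) (hm : 1 ≤ m)
    (g ginf : Fin m → (Fin d → ℝ) → ℝ)
    (hgLip : ∀ k, ∃ L : ℝ, ∀ x y : Fin d → ℝ, |g k x - g k y| ≤ L * ‖x - y‖)
    (hgS : ∀ k, SISTr (g k))
    (hglim : ∀ k (x : Fin d → ℝ),
      Filter.Tendsto (fun c : ℝ => g k (c • x) / c) Filter.atTop (nhds (ginf k x)))
    (hginf0 : ∀ k, SISTrAt (ginf k) 0)
    (ψ ψinf : (Fin m → ℝ) → ℝ)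
    (hψLip : ∃ L : ℝ, ∀ y y' : Fin m → ℝ, |ψ y - ψ y'| ≤ L * ‖y - y'‖)
    (hψmono : ∀ y y' : Fin m → ℝ, (∀ i, y' i < y i) → ψ y' < ψ y)
    (hψtop : ∀ M : ℝ, ∃ N : ℝ, ∀ y : Fin m → ℝ, (∀ i, N ≤ y i) → M ≤ ψ y)
    (hψbot : ∀ M : ℝ, ∃ N : ℝ, ∀ y : Fin m → ℝ, (∀ i, y i ≤ N) → ψ y ≤ M)
    (hψlim : ∀ y : Fin m → ℝ,
      Filter.Tendsto (fun c : ℝ => ψ (c • y) / c) Filter.atTop (nhds (ψinf y)))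
    (hψinfLip : ∃ L : ℝ, ∀ y y' : Fin m → ℝ, |ψinf y - ψinf y'| ≤ L * ‖y - y'‖)
    (hψinfmono : ∀ y y' : Fin m → ℝ, (∀ i, y' i < y i) → ψinf y' < ψinf y)
    (hψinftop : ∀ M : ℝ, ∃ N : ℝ, ∀ y : Fin m → ℝ, (∀ i, N ≤ y i) → M ≤ ψinf y)
    (hψinfbot : ∀ M : ℝ, ∃ N : ℝ, ∀ y : Fin m → ℝ, (∀ i, y i ≤ N) → ψinf y ≤ M) :
    (∃ L : ℝ, ∀ x y : Fin d → ℝ,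
      |ψ (fun k => g k x) - ψ (fun k => g k y)| ≤ L * ‖x - y‖) ∧
    SISTr (fun x : Fin d → ℝ => ψ (fun k => g k x)) ∧
    (∀ x : Fin d → ℝ,
      Filter.Tendsto (fun c : ℝ => ψ (fun k => g k (c • x)) / c) Filter.atTop
        (nhds (ψinf (fun k => ginf k x)))) ∧
    SISTrAt (fun x : Fin d → ℝ => ψinf (fun k => ginf k x)) 0 := by
  obtain ⟨Lψ, hLψ⟩ := hψLip
  obtain ⟨Lψi, hLψi⟩ := hψinfLip
  choose Lg hLg using hgLip
  have hψc : Continuous ψ := (lipAux hLψ).continuous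
  have hψic : Continuous ψinf := (lipAux hLψi).continuous
  refine ⟨?_, ?_, ?_, ?_⟩
  · -- Lipschitz
    set K : ℝ := ∑ k, |Lg k| with hK
    have hKk : ∀ k, |Lg k| ≤ K := fun k =>
      Finset.single_le_sum (fun j _ => abs_nonneg (Lg j)) (Finset.mem_univ k)
    refine ⟨|Lψ| * K, fun x y => ?_⟩
    have hKnn : 0 ≤ K := Finset.sum_nonneg fun j _ => abs_nonneg (Lg j)
    have h1 : ‖(fun k => g k x) - (fun k => g k y)‖ ≤ K * ‖x - y‖ := by
      rw [pi_norm_le_iff_of_nonneg (by positivity)]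
      intro k
      rw [Pi.sub_apply, Real.norm_eq_abs]
      calc |g k x - g k y| ≤ Lg k * ‖x - y‖ := hLg k x y
        _ ≤ |Lg k| * ‖x - y‖ :=
            mul_le_mul_of_nonneg_right (le_abs_self _) (norm_nonneg _)
        _ ≤ K * ‖x - y‖ := mul_le_mul_of_nonneg_right (hKk k) (norm_nonneg _)
    calc |ψ (fun k => g k x) - ψ (fun k => g k y)|
        ≤ Lψ * ‖(fun k => g k x) - (fun k => g k y)‖ := hLψ _ _
      _ ≤ |Lψ| * ‖(fun k => g k x) - (fun k => g k y)‖ :=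
          mul_le_mul_of_nonneg_right (le_abs_self _) (norm_nonneg _)
      _ ≤ |Lψ| * (K * ‖x - y‖) :=
          mul_le_mul_of_nonneg_left h1 (abs_nonneg _)
      _ = |Lψ| * K * ‖x - y‖ := by ring
  · -- SISTr
    intro x
    exact compSISTr (fun k c => g k (fun i => x i + c))
      (fun k => (hgS k x).1) (fun k => (hgS k x).2) ψ hψc hψmono hψtop hψbot
  · -- scaling limit
    intro x
    set Y : Fin m → ℝ := fun k => ginf k x with hY
    have h2 : Tendsto (fun c : ℝ => ψ (c • Y) / c) atTop (nhds (ψinf Y)) := hψlim Y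
    set E : ℝ → (Fin m → ℝ) := fun c k => g k (c • x) / c - ginf k x with hE
    have he : Tendsto E atTop (nhds 0) := by
      rw [tendsto_pi_nhds]
      intro k
      simpa using ((hglim k x).sub (tendsto_const_nhds (x := ginf k x)))
    have hnorm : Tendsto (fun c : ℝ => |Lψ| * ‖E c‖) atTop (nhds 0) := by
      have h := he.norm
      simpa using h.const_mul |Lψ|
    have hdiff : Tendsto
        (fun c : ℝ => ψ (fun k => g k (c • x)) / c - ψ (c • Y) / c) atTop (nhds 0) := by
      apply squeeze_zero_norm' _ hnorm
      filter_upwards [eventually_gt_atTop (0 : ℝ)] with c hc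
      have hc' : c ≠ 0 := ne_of_gt hc
      have hvE : (fun k => g k (c • x)) - c • Y = c • E c := by
        funext k
        simp only [Pi.sub_apply, Pi.smul_apply, smul_eq_mul, hE, hY]
        field_simp
      have hnv : ‖(fun k => g k (c • x)) - c • Y‖ = c * ‖E c‖ := by
        rw [hvE, norm_smul, Real.norm_eq_abs, abs_of_pos hc]
      rw [Real.norm_eq_abs, div_sub_div_same, abs_div, abs_of_pos hc, div_le_iff₀ hc]
      calc |ψ (fun k => g k (c • x)) - ψ (c • Y)|
          ≤ Lψ * ‖(fun k => g k (c • x)) - c • Y‖ := hLψ _ _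
        _ ≤ |Lψ| * ‖(fun k => g k (c • x)) - c • Y‖ :=
            mul_le_mul_of_nonneg_right (le_abs_self _) (norm_nonneg _)
        _ = |Lψ| * ‖E c‖ * c := by rw [hnv]; ring
    have := h2.add hdiff
    simp only [add_zero] at this
    have heq : (fun c : ℝ => ψ (c • Y) / c +
        (ψ (fun k => g k (c • x)) / c - ψ (c • Y) / c)) =
        fun c : ℝ => ψ (fun k => g k (c • x)) / c := by
      funext c; ring
    rw [heq] at this
    exact this
  · -- SISTrAt at 0
    exact compSISTr (fun k c => ginf k (fun i => (0 : Fin d → ℝ) i + c))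
      (fun k => (hginf0 k).1) (fun k => (hginf0 k).2) ψinf hψic hψinfmono hψinftop hψinfbot
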